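/- Assume the weak form of Szpiro's conjecture. Then the equation x²·y + y²·x = 7^m·n! has only finitely many solutions in positive integers m, n and integers x, y with gcd(x,y) = 1; the same holds for the equation x²·y − y²·x = 7^m·n!. -/

import Mathlib

/-- The algebraic radical of an integer: the product of the distinct primes dividing it. -/
def rad (m : ℤ) : ℕ := ∏ p ∈ m.natAbs.primeFactors, p

/-- The weak form of Szpiro's conjecture: there is a constant `s > 0` such that for all
non-zero pairwise coprime integers `A, B, C` with `A + B = C` one has
`|A*B*C| < rad (A*B*C) ^ s`. -/
def WeakSzpiroConjecture : Prop :=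
  ∃ s : ℝ, 0 < s ∧ ∀ A B C : ℤ, A ≠ 0 → B ≠ 0 → C ≠ 0 →
    IsCoprime A B → IsCoprime A C → IsCoprime B C → A + B = C →
    ((|A * B * C| : ℤ) : ℝ) < (rad (A * B * C) : ℝ) ^ s

lemma szpiro_core (hsz : WeakSzpiroConjecture) :
    ∃ M : ℕ, ∀ (m n : ℕ) (A B C : ℤ), 0 < m → 0 < n → IsCoprime A B → A + B = C →
      A * B * C = 7 ^ m * (n.factorial : ℤ) →
      m ≤ M ∧ n ≤ M ∧ A.natAbs ≤ M ∧ B.natAbs ≤ M ∧ C.natAbs ≤ M := by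
  obtain ⟨s, hs, hc⟩ := hsz
  set k : ℕ := ⌈s⌉₊ with hk
  have hk1 : 1 ≤ k := Nat.one_le_iff_ne_zero.mpr (by positivity)
  set b : ℕ := 4 ^ k with hbdef
  have hb2 : 2 ≤ b := by
    calc (2:ℕ) ≤ 4 ^ 1 := by norm_num
    _ ≤ 4 ^ k := Nat.pow_le_pow_right (by norm_num) hk1
  -- eventual domination of b^(n+7) by n!
  obtain ⟨N, hN⟩ : ∃ N : ℕ, ∀ n ≥ N, ((b : ℝ)) ^ (n + 7) ≤ (n.factorial : ℝ) := by
    have hεpos : (0:ℝ) < ((b:ℝ) ^ 7)⁻¹ := by positivity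
    have h := (FloorSemiring.tendsto_pow_div_factorial_atTop (K := ℝ) (b : ℝ)).eventually
      (gt_mem_nhds hεpos)
    obtain ⟨N, hN⟩ := Filter.eventually_atTop.mp h
    refine ⟨N, fun n hn => ?_⟩
    have h1 := hN n hn
    have hfac : (0:ℝ) < (n.factorial : ℝ) := by positivity
    rw [div_lt_iff₀ hfac] at h1
    have h2 : (b:ℝ) ^ 7 * ((b:ℝ)^n) < (b:ℝ)^7 * (((b:ℝ)^7)⁻¹ * n.factorial) :=
      mul_lt_mul_of_pos_left h1 (by positivity)
    rw [← mul_assoc, mul_inv_cancel₀ (by positivity), one_mul] at h2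
    calc ((b:ℝ)) ^ (n + 7) = (b:ℝ)^7 * (b:ℝ)^n := by ring
    _ ≤ (n.factorial : ℝ) := le_of_lt h2
  refine ⟨b ^ (N + 7), fun m n A B C hm hn hAB hsum heq => ?_⟩
  set M : ℕ := b ^ (N + 7) with hM
  have hrhs : (7:ℤ) ^ m * (n.factorial : ℤ) ≠ 0 := by positivity
  have hABC : A * B * C ≠ 0 := heq ▸ hrhs
  have hA : A ≠ 0 := fun h => hABC (by simp [h])
  have hB : B ≠ 0 := fun h => hABC (by simp [h])
  have hC : C ≠ 0 := fun h => hABC (by simp [h])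
  have hAC : IsCoprime A C := by
    have := hAB.add_mul_right_right 1
    rw [one_mul, add_comm B A, hsum] at this
    exact this
  have hBC : IsCoprime B C := by
    have := hAB.symm.add_mul_right_right 1
    rw [one_mul, hsum] at this
    exact this
  have hlt := hc A B C hA hB hC hAB hAC hBC hsum
  have heq' : A * B * C = ((7 ^ m * n.factorial : ℕ) : ℤ) := by push_cast; exact heq
  have hnatabs : (A * B * C).natAbs = 7 ^ m * n.factorial := by
    rw [heq', Int.natAbs_natCast]
  have habs : |A * B * C| = (7:ℤ) ^ m * (n.factorial : ℤ) := by
    rw [heq]; exact abs_of_nonneg (by positivity)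
  -- radical bound
  have hrad : rad (A * B * C) ≤ 4 ^ (n + 7) := by
    have hsub : (7 ^ m * n.factorial).primeFactors ⊆
        Finset.filter Nat.Prime (Finset.range (n + 7 + 1)) := by
      intro p hp
      rw [Nat.mem_primeFactors] at hp
      obtain ⟨hpp, hpd, -⟩ := hp
      rw [Finset.mem_filter, Finset.mem_range]
      refine ⟨?_, hpp⟩
      rcases (Nat.Prime.dvd_mul hpp).mp hpd with h7 | hfac
      · have : p ∣ 7 := hpp.dvd_of_dvd_pow h7
        have : p ≤ 7 := Nat.le_of_dvd (by norm_num) this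
        omega
      · have := (Nat.Prime.dvd_factorial hpp).mp hfac
        omega
    have h1 : rad (A * B * C) ≤ primorial (n + 7) := by
      unfold rad
      rw [hnatabs]
      unfold primorial
      exact Finset.prod_le_prod_of_subset_of_one_le' hsub
        (fun i hi _ => (Finset.mem_filter.mp hi).2.one_lt.le)
    exact h1.trans (primorial_le_4_pow (n + 7))
  -- main real inequality
  have hmain : ((7:ℝ) ^ m * (n.factorial : ℝ)) < (b:ℝ) ^ (n + 7) := by
    have h1 : ((7:ℝ) ^ m * (n.factorial : ℝ)) < (rad (A * B * C) : ℝ) ^ s := by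
      have := hlt
      rw [habs] at this
      push_cast at this
      exact this
    have h2 : (rad (A * B * C) : ℝ) ^ s ≤ ((4:ℝ) ^ (n + 7)) ^ s := by
      apply Real.rpow_le_rpow (by positivity) _ hs.le
      exact_mod_cast hrad
    have h3 : ((4:ℝ) ^ (n + 7)) ^ s ≤ ((4:ℝ) ^ (n + 7)) ^ (k : ℝ) := by
      apply Real.rpow_le_rpow_of_exponent_le (one_le_pow₀ (by norm_num))
      exact Nat.le_ceil s
    have h4 : ((4:ℝ) ^ (n + 7)) ^ (k : ℝ) = (b:ℝ) ^ (n + 7) := by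
      rw [Real.rpow_natCast, hbdef]
      push_cast
      rw [← pow_mul, ← pow_mul, Nat.mul_comm]
    calc ((7:ℝ) ^ m * (n.factorial : ℝ)) < (rad (A * B * C) : ℝ) ^ s := h1
    _ ≤ ((4:ℝ) ^ (n + 7)) ^ s := h2
    _ ≤ ((4:ℝ) ^ (n + 7)) ^ (k : ℝ) := h3
    _ = (b:ℝ) ^ (n + 7) := h4
  -- n bound
  have hnN : n < N := by
    by_contra hcon
    push_neg at hcon
    have h1 := hN n hcon
    have h2 : (n.factorial : ℝ) ≤ (7:ℝ) ^ m * (n.factorial : ℝ) := by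
      nlinarith [Nat.factorial_pos n, (by positivity : (0:ℝ) < (n.factorial : ℝ)),
        one_le_pow₀ (by norm_num : (1:ℝ) ≤ 7) (n := m)]
    linarith
  -- nat inequality
  have hnat : 7 ^ m * n.factorial < M := by
    have hble : ((b:ℝ)) ^ (n + 7) ≤ ((b:ℝ)) ^ (N + 7) := by
      apply pow_le_pow_right₀ (by exact_mod_cast hb2.trans' (by norm_num) : (1:ℝ) ≤ (b:ℝ))
      omega
    have h5 : ((7 ^ m * n.factorial : ℕ) : ℝ) < (((b ^ (N + 7) : ℕ)) : ℝ) := by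
      push_cast
      exact lt_of_lt_of_le hmain hble
    rw [hM]
    exact_mod_cast h5
  have hNM : N ≤ M := by
    have h1 : N < 2 ^ N := Nat.lt_two_pow_self
    have h2 : 2 ^ N ≤ b ^ N := Nat.pow_le_pow_left hb2 N
    have h3 : b ^ N ≤ b ^ (N + 7) := Nat.pow_le_pow_right (by omega) (by omega)
    omega
  have hmM : m ≤ M := by
    have h1 : m < 7 ^ m := Nat.lt_pow_self (by norm_num)
    have h2 : 7 ^ m ≤ 7 ^ m * n.factorial := Nat.le_mul_of_pos_right _ (Nat.factorial_pos n)
    omega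
  have hbound : ∀ X Y Z : ℤ, X * Y * Z = A * B * C → Y ≠ 0 → Z ≠ 0 → X.natAbs ≤ M := by
    intro X Y Z hXYZ hY hZ
    have h1 : X.natAbs * (Y.natAbs * Z.natAbs) = 7 ^ m * n.factorial := by
      rw [← hnatabs, ← hXYZ]
      rw [Int.natAbs_mul, Int.natAbs_mul, mul_assoc]
    have h2 : 0 < Y.natAbs * Z.natAbs :=
      Nat.mul_pos (Int.natAbs_pos.mpr hY) (Int.natAbs_pos.mpr hZ)
    calc X.natAbs ≤ X.natAbs * (Y.natAbs * Z.natAbs) := Nat.le_mul_of_pos_right _ (by omega)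
    _ = 7 ^ m * n.factorial := h1
    _ ≤ M := hnat.le
  exact ⟨hmM, by omega, hbound A B C rfl hB hC, hbound B A C (by ring) hA hC,
    hbound C A B (by ring) hA hB⟩


/-- Assuming the weak form of Szpiro's conjecture, the equation
`x² y + y² x = 7^m n!` has only finitely many solutions in positive integers `m, n` and
coprime integers `x, y`; the same holds for `x² y - y² x = 7^m n!`. -/
theorem stmt_13 (hsz : WeakSzpiroConjecture) :
    {t : ℕ × ℕ × ℤ × ℤ | 0 < t.1 ∧ 0 < t.2.1 ∧ Int.gcd t.2.2.1 t.2.2.2 = 1 ∧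
      t.2.2.1 ^ 2 * t.2.2.2 + t.2.2.2 ^ 2 * t.2.2.1 =
        (7 : ℤ) ^ t.1 * (t.2.1.factorial : ℤ)}.Finite ∧
    {t : ℕ × ℕ × ℤ × ℤ | 0 < t.1 ∧ 0 < t.2.1 ∧ Int.gcd t.2.2.1 t.2.2.2 = 1 ∧
      t.2.2.1 ^ 2 * t.2.2.2 - t.2.2.2 ^ 2 * t.2.2.1 =
        (7 : ℤ) ^ t.1 * (t.2.1.factorial : ℤ)}.Finite := by
  obtain ⟨M, hM⟩ := szpiro_core hsz
  have hF : (↑((Finset.Iic M) ×ˢ (Finset.Iic M) ×ˢ (Finset.Icc (-(M:ℤ)) M) ×ˢ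
      (Finset.Icc (-(M:ℤ)) M)) : Set (ℕ × ℕ × ℤ × ℤ)).Finite := Finset.finite_toSet _
  constructor
  · apply hF.subset
    rintro ⟨m, n, x, y⟩ ⟨hm, hn, hg, heq⟩
    simp only at hm hn hg heq
    have hcop : IsCoprime x y := Int.isCoprime_iff_gcd_eq_one.mpr hg
    have heq' : x * y * (x + y) = 7 ^ m * (n.factorial : ℤ) := by linear_combination heq
    obtain ⟨h1, h2, h3, h4, h5⟩ := hM m n x y (x + y) hm hn hcop rfl heq'
    simp only [Finset.coe_product, Set.mem_prod, Finset.mem_coe, Finset.mem_Iic,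
      Finset.mem_Icc]
    refine ⟨h1, h2, ?_, ?_⟩ <;> constructor <;> omega
  · apply hF.subset
    rintro ⟨m, n, x, y⟩ ⟨hm, hn, hg, heq⟩
    simp only at hm hn hg heq
    have hcop : IsCoprime x y := Int.isCoprime_iff_gcd_eq_one.mpr hg
    have hcop' : IsCoprime y (x - y) := by
      have := (Int.isCoprime_iff_gcd_eq_one.mpr hg).symm.add_mul_right_right (-1)
      rw [show x + -1 * y = x - y by ring] at this
      exact this
    have hsum : y + (x - y) = x := by ring
    have heq' : y * (x - y) * x = 7 ^ m * (n.factorial : ℤ) := by linear_combination heq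
    obtain ⟨h1, h2, h3, h4, h5⟩ := hM m n y (x - y) x hm hn hcop' hsum heq'
    simp only [Finset.coe_product, Set.mem_prod, Finset.mem_coe, Finset.mem_Iic,
      Finset.mem_Icc]
    refine ⟨h1, h2, ?_, ?_⟩ <;> constructor <;> omega
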